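/- Let f : ℝ^d → ℝ be continuous and ρ-weakly convex and let 0 < μ < 1/ρ. Then the proximal mapping w ↦ v_{μf}(w) is (1−μρ)⁻¹-Lipschitz continuous: ‖v_{μf}(w₁) − v_{μf}(w₂)‖ ≤ (1−μρ)⁻¹‖w₁ − w₂‖ for all w₁, w₂ ∈ ℝ^d. -/

import Mathlib

open scoped RealInnerProductSpace

lemma combo_norm_sq {d : ℕ} (a b : EuclideanSpace ℝ (Fin d)) (t : ℝ) (ht0 : 0 ≤ t)
    (ht1 : t ≤ 1) :
    ‖(1 - t) • a + t • b‖ ^ 2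
      = (1 - t) * ‖a‖ ^ 2 + t * ‖b‖ ^ 2 - t * (1 - t) * ‖a - b‖ ^ 2 := by
  have h1 : ‖(1 - t) • a + t • b‖ ^ 2
      = ‖(1 - t) • a‖ ^ 2 + 2 * ⟪(1 - t) • a, t • b⟫ + ‖t • b‖ ^ 2 :=
    norm_add_sq_real _ _
  have h2 : ‖a - b‖ ^ 2 = ‖a‖ ^ 2 - 2 * ⟪a, b⟫ + ‖b‖ ^ 2 := norm_sub_sq_real a b
  have h3 : ‖(1 - t) • a‖ = (1 - t) * ‖a‖ := by
    rw [norm_smul, Real.norm_eq_abs, abs_of_nonneg (by linarith)]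
  have h4 : ‖t • b‖ = t * ‖b‖ := by
    rw [norm_smul, Real.norm_eq_abs, abs_of_nonneg ht0]
  have h5 : ⟪(1 - t) • a, t • b⟫ = (1 - t) * (t * ⟪a, b⟫) := by
    rw [real_inner_smul_left, real_inner_smul_right]
  rw [h1, h3, h4, h5, h2]
  ring

lemma expand_inner {d : ℕ} (v₁ v₂ w₁ w₂ : EuclideanSpace ℝ (Fin d)) :
    ‖v₂ - w₁‖ ^ 2 + ‖v₁ - w₂‖ ^ 2 - ‖v₁ - w₁‖ ^ 2 - ‖v₂ - w₂‖ ^ 2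
      = 2 * ⟪v₁ - v₂, w₁ - w₂⟫ := by
  have e : ∀ x y : EuclideanSpace ℝ (Fin d), ‖x - y‖ ^ 2 = ‖x‖ ^ 2 - 2 * ⟪x, y⟫ + ‖y‖ ^ 2 :=
    fun x y => norm_sub_sq_real x y
  rw [e, e, e, e, inner_sub_left, inner_sub_right, inner_sub_right]
  ring


set_option maxHeartbeats 1000000 in
theorem stmt5 (d : ℕ) (f : EuclideanSpace ℝ (Fin d) → ℝ) (ρ : ℝ) (hρ : 0 ≤ ρ)
    (hcont : Continuous f)
    (hwc : ConvexOn ℝ Set.univ (fun w => f w + ρ / 2 * ‖w‖ ^ 2))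
    (μ : ℝ) (hμ : 0 < μ) (hμρ : μ * ρ < 1)
    (v : EuclideanSpace ℝ (Fin d) → EuclideanSpace ℝ (Fin d))
    (hmin : ∀ w u, f (v w) + ‖v w - w‖ ^ 2 / (2 * μ) ≤ f u + ‖u - w‖ ^ 2 / (2 * μ)) :
    ∀ w₁ w₂, ‖v w₁ - v w₂‖ ≤ (1 - μ * ρ)⁻¹ * ‖w₁ - w₂‖ := by
  intro w₁ w₂
  have hμ0 : μ ≠ 0 := ne_of_gt hμ
  set α : ℝ := 1 / μ - ρ with hα
  have hα0 : 0 < α := by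
    rw [hα]
    have : ρ < 1 / μ := by rw [lt_div_iff₀ hμ]; linarith
    linarith
  -- Key: strong minimality inequality
  have key : ∀ w u, f (v w) + ‖v w - w‖ ^ 2 / (2 * μ) + α / 2 * ‖u - v w‖ ^ 2
      ≤ f u + ‖u - w‖ ^ 2 / (2 * μ) := by
    intro w u
    set p := v w with hp
    have step : ∀ t : ℝ, 0 < t → t < 1 →
        α / 2 * (1 - t) * ‖u - p‖ ^ 2
          ≤ (f u + ‖u - w‖ ^ 2 / (2 * μ)) - (f p + ‖p - w‖ ^ 2 / (2 * μ)) := by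
      intro t ht0 ht1
      set m : EuclideanSpace ℝ (Fin d) := (1 - t) • p + t • u with hm
      have h1 : f p + ‖p - w‖ ^ 2 / (2 * μ) ≤ f m + ‖m - w‖ ^ 2 / (2 * μ) := hmin w m
      have hconv := hwc.2 (Set.mem_univ p) (Set.mem_univ u)
        (by linarith : (0:ℝ) ≤ 1 - t) ht0.le (by ring)
      simp only [smul_eq_mul] at hconv
      rw [← hm] at hconv
      have hA : ‖m‖ ^ 2 = (1 - t) * ‖p‖ ^ 2 + t * ‖u‖ ^ 2 - t * (1 - t) * ‖p - u‖ ^ 2 :=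
        combo_norm_sq p u t ht0.le ht1.le
      have hshift : m - w = (1 - t) • (p - w) + t • (u - w) := by
        rw [hm]; module
      have hB : ‖m - w‖ ^ 2 = (1 - t) * ‖p - w‖ ^ 2 + t * ‖u - w‖ ^ 2
          - t * (1 - t) * ‖p - u‖ ^ 2 := by
        rw [hshift, combo_norm_sq (p - w) (u - w) t ht0.le ht1.le]
        have e : p - w - (u - w) = p - u := by abel
        rw [e]
      have hpu : ‖p - u‖ = ‖u - p‖ := norm_sub_rev p u
      rw [hpu] at hA hB
      -- bound f m
      have hA' : ρ / 2 * ‖m‖ ^ 2 = ρ / 2 * ((1 - t) * ‖p‖ ^ 2) + ρ / 2 * (t * ‖u‖ ^ 2)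
          - ρ / 2 * (t * (1 - t) * ‖u - p‖ ^ 2) := by rw [hA]; ring
      have e1 : (1 - t) * (f p + ρ / 2 * ‖p‖ ^ 2) + t * (f u + ρ / 2 * ‖u‖ ^ 2)
          = (1 - t) * f p + t * f u + ρ / 2 * ((1 - t) * ‖p‖ ^ 2)
            + ρ / 2 * (t * ‖u‖ ^ 2) := by ring
      have c1 : f m ≤ (1 - t) * f p + t * f u + ρ / 2 * (t * (1 - t) * ‖u - p‖ ^ 2) := by
        linarith [hconv, hA', e1]
      have h4' : ‖m - w‖ ^ 2 / (2 * μ) = (1 - t) * (‖p - w‖ ^ 2 / (2 * μ))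
          + t * (‖u - w‖ ^ 2 / (2 * μ)) - t * (1 - t) * ‖u - p‖ ^ 2 / (2 * μ) := by
        rw [hB]; field_simp
      have hcomb : f p + ‖p - w‖ ^ 2 / (2 * μ)
          ≤ (1 - t) * f p + t * f u + ρ / 2 * (t * (1 - t) * ‖u - p‖ ^ 2)
            + (1 - t) * (‖p - w‖ ^ 2 / (2 * μ)) + t * (‖u - w‖ ^ 2 / (2 * μ))
            - t * (1 - t) * ‖u - p‖ ^ 2 / (2 * μ) := by
        linarith [h1, c1, h4']
      have eT : t * ((f u + ‖u - w‖ ^ 2 / (2 * μ)) - (f p + ‖p - w‖ ^ 2 / (2 * μ)))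
            - t * (α / 2 * (1 - t) * ‖u - p‖ ^ 2)
          = ((1 - t) * f p + t * f u + ρ / 2 * (t * (1 - t) * ‖u - p‖ ^ 2)
            + (1 - t) * (‖p - w‖ ^ 2 / (2 * μ)) + t * (‖u - w‖ ^ 2 / (2 * μ))
            - t * (1 - t) * ‖u - p‖ ^ 2 / (2 * μ))
            - (f p + ‖p - w‖ ^ 2 / (2 * μ)) := by
        rw [hα]; field_simp; ring
      have T : t * (α / 2 * (1 - t) * ‖u - p‖ ^ 2)
          ≤ t * ((f u + ‖u - w‖ ^ 2 / (2 * μ)) - (f p + ‖p - w‖ ^ 2 / (2 * μ))) := by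
        linarith [hcomb, eT]
      exact (mul_le_mul_iff_right₀ ht0).mp T
    -- take limit t → 0⁺
    have hten : Filter.Tendsto (fun t : ℝ => α / 2 * (1 - t) * ‖u - p‖ ^ 2)
        (nhdsWithin 0 (Set.Ioi 0)) (nhds (α / 2 * ‖u - p‖ ^ 2)) := by
      have hc : Continuous (fun t : ℝ => α / 2 * (1 - t) * ‖u - p‖ ^ 2) := by
        continuity
      have := (hc.tendsto 0).mono_left (nhdsWithin_le_nhds (s := Set.Ioi (0:ℝ)))
      simpa using this
    have hev : ∀ᶠ t in nhdsWithin (0:ℝ) (Set.Ioi 0),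
        α / 2 * (1 - t) * ‖u - p‖ ^ 2
          ≤ (f u + ‖u - w‖ ^ 2 / (2 * μ)) - (f p + ‖p - w‖ ^ 2 / (2 * μ)) := by
      filter_upwards [Ioo_mem_nhdsGT_of_mem (by constructor <;> norm_num :
        (0:ℝ) ∈ Set.Ico (0:ℝ) 1)] with t ht
      exact step t ht.1 ht.2
    have := le_of_tendsto hten hev
    linarith [this]
  -- combine for w₁, w₂
  have k1 := key w₁ (v w₂)
  have k2 := key w₂ (v w₁)
  have hrev : ‖v w₂ - v w₁‖ = ‖v w₁ - v w₂‖ := norm_sub_rev _ _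
  rw [hrev] at k1
  have hexp := expand_inner (v w₁) (v w₂) w₁ w₂
  have eαs : α / 2 * ‖v w₁ - v w₂‖ ^ 2 + α / 2 * ‖v w₁ - v w₂‖ ^ 2
      = α * ‖v w₁ - v w₂‖ ^ 2 := by ring
  have hs1 : α * ‖v w₁ - v w₂‖ ^ 2
      ≤ ‖v w₂ - w₁‖ ^ 2 / (2 * μ) + ‖v w₁ - w₂‖ ^ 2 / (2 * μ)
        - ‖v w₁ - w₁‖ ^ 2 / (2 * μ) - ‖v w₂ - w₂‖ ^ 2 / (2 * μ) := by
    linarith [k1, k2, eαs]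
  have hs2 : ‖v w₂ - w₁‖ ^ 2 / (2 * μ) + ‖v w₁ - w₂‖ ^ 2 / (2 * μ)
        - ‖v w₁ - w₁‖ ^ 2 / (2 * μ) - ‖v w₂ - w₂‖ ^ 2 / (2 * μ)
      = (2 * ⟪v w₁ - v w₂, w₁ - w₂⟫) / (2 * μ) := by
    rw [← hexp]; ring
  have h := hs1.trans_eq hs2
  have h2 := mul_le_mul_of_nonneg_left h hμ.le
  have e1 : μ * (α * ‖v w₁ - v w₂‖ ^ 2) = (1 - μ * ρ) * ‖v w₁ - v w₂‖ ^ 2 := by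
    rw [hα]; field_simp
  have e2' : ∀ x : ℝ, μ * (2 * x / (2 * μ)) = x := fun x => by field_simp
  have e2 : μ * ((2 * ⟪v w₁ - v w₂, w₁ - w₂⟫) / (2 * μ)) = ⟪v w₁ - v w₂, w₁ - w₂⟫ := e2' _
  have hcs : ⟪v w₁ - v w₂, w₁ - w₂⟫ ≤ ‖v w₁ - v w₂‖ * ‖w₁ - w₂‖ :=
    real_inner_le_norm _ _
  have hkey2 : (1 - μ * ρ) * ‖v w₁ - v w₂‖ ^ 2 ≤ ‖v w₁ - v w₂‖ * ‖w₁ - w₂‖ := by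
    calc (1 - μ * ρ) * ‖v w₁ - v w₂‖ ^ 2 = μ * (α * ‖v w₁ - v w₂‖ ^ 2) := e1.symm
      _ ≤ μ * ((2 * ⟪v w₁ - v w₂, w₁ - w₂⟫) / (2 * μ)) := h2
      _ = ⟪v w₁ - v w₂, w₁ - w₂⟫ := e2
      _ ≤ ‖v w₁ - v w₂‖ * ‖w₁ - w₂‖ := hcs
  have h1ρ : (0:ℝ) < 1 - μ * ρ := by linarith
  rcases eq_or_lt_of_le (norm_nonneg (v w₁ - v w₂)) with h0 | h0
  · rw [← h0]
    exact mul_nonneg (inv_nonneg.mpr (by linarith : (0:ℝ) ≤ 1 - μ * ρ)) (norm_nonneg _)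
  · rw [inv_mul_eq_div, le_div_iff₀ h1ρ]
    nlinarith [hkey2, h0]
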